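/- Let α, β be real numbers with α > β > −1/2 and ρ = α + β + 1, and let c be the Jacobi c-function. There exist constants C, R > 0 such that for all real λ with |λ| ≥ R, the derivative of the function λ ↦ c(λ)^{−1} satisfies |(c^{−1})′(λ)| ≤ C |λ|^{α − 1/2}. -/

import Mathlib

open Complex

/-- The Jacobi `c`-function
`c(λ) = 2^{ρ−iλ} Γ(iλ) Γ(α+1) / (Γ((ρ+iλ)/2) Γ((ρ+iλ)/2 − β))` with `ρ = α+β+1`. -/
noncomputable def jacobiC (α β : ℝ) (z : ℂ) : ℂ :=
  (2 : ℂ) ^ ((α : ℂ) + β + 1 - Complex.I * z) * Complex.Gamma (Complex.I * z) *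
    Complex.Gamma ((α : ℂ) + 1) /
    (Complex.Gamma (((α : ℂ) + β + 1 + Complex.I * z) / 2) *
     Complex.Gamma (((α : ℂ) + β + 1 + Complex.I * z) / 2 - β))

open Finset Filter Topology

set_option maxHeartbeats 1000000

private lemma sum_inv_ksq_add_one_le (m : ℕ) :
    ∑ k ∈ range m, (1:ℝ)/((k:ℝ)^2+1) ≤ 5/2 := by
  have key : ∀ m : ℕ, ∑ k ∈ range (m+2), (1:ℝ)/((k:ℝ)^2+1) ≤ 5/2 - 1/((m:ℝ)+1) := by
    intro m
    induction m with
    | zero => norm_num [Finset.sum_range_succ]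
    | succ n ih =>
      rw [show n+1+2 = (n+2)+1 from rfl, Finset.sum_range_succ]
      have h1 : (1:ℝ)/(((n+2:ℕ):ℝ)^2+1) ≤ 1/((n:ℝ)+1) - 1/((n:ℝ)+2) := by
        push_cast
        rw [div_sub_div _ _ (by positivity) (by positivity)]
        rw [div_le_div_iff₀ (by positivity) (by positivity)]
        nlinarith [sq_nonneg ((n:ℝ)+1)]
      push_cast at h1 ⊢
      have e : (1:ℝ)/(↑n+1+1) = 1/((n:ℝ)+2) := by ring_nf
      rw [e]
      linarith
  match m with
  | 0 => norm_num
  | 1 => norm_num [Finset.sum_range_succ]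
  | (n+2) =>
    have h := key n
    have h2 : (0:ℝ) < 1/((n:ℝ)+1) := by positivity
    linarith

private lemma sum_inv_shift_le (c y : ℝ) (hy : 1 ≤ y^2) (n : ℕ) :
    ∑ j ∈ range n, (1:ℝ)/((c+(j:ℝ))^2+y^2) ≤ 5 := by
  set j₀ : ℕ := ⌈-c⌉₊ with hj₀
  have hcj₀ : 0 ≤ c + j₀ := by
    have := Nat.le_ceil (-c); linarith
  set m : ℕ := min j₀ n with hm
  have hsplit : ∑ j ∈ range n, (1:ℝ)/((c+(j:ℝ))^2+y^2)
      = ∑ j ∈ Ico 0 m, (1:ℝ)/((c+(j:ℝ))^2+y^2)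
        + ∑ j ∈ Ico m n, (1:ℝ)/((c+(j:ℝ))^2+y^2) := by
    rw [range_eq_Ico, ← Finset.sum_Ico_consecutive _ (Nat.zero_le m) (min_le_right j₀ n)]
  rw [hsplit]
  have hub : ∀ j : ℕ, j₀ ≤ j → (1:ℝ)/((c+(j:ℝ))^2+y^2) ≤ 1/(((j-j₀ : ℕ):ℝ)^2+1) := by
    intro j hj
    have h1 : ((j-j₀:ℕ):ℝ) = (j:ℝ) - j₀ := by
      rw [Nat.cast_sub hj]
    have h2 : ((j-j₀:ℕ):ℝ) ≤ c + j := by rw [h1]; linarith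
    have h3 : (0:ℝ) ≤ ((j-j₀:ℕ):ℝ) := Nat.cast_nonneg _
    apply one_div_le_one_div_of_le (by positivity)
    nlinarith
  have hlb : ∀ j : ℕ, j < j₀ → (1:ℝ)/((c+(j:ℝ))^2+y^2) ≤ 1/(((j₀-1-j : ℕ):ℝ)^2+1) := by
    intro j hj
    have hj₀pos : 0 < j₀ := by omega
    have hcpos : 0 < -c := by
      by_contra h
      push_neg at h
      have : j₀ = 0 := by
        rw [hj₀]; exact Nat.ceil_eq_zero.mpr (by linarith)
      omega
    have hceil : (j₀:ℝ) < -c + 1 := by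
      have := Nat.ceil_lt_add_one (le_of_lt hcpos)
      rw [hj₀]; exact this
    have h1 : ((j₀-1-j:ℕ):ℝ) = (j₀:ℝ) - 1 - j := by
      have e : j₀ - 1 - j = j₀ - (1+j) := by omega
      rw [e, Nat.cast_sub (by omega)]
      push_cast; ring
    have h2 : c + j ≤ -((j₀-1-j:ℕ):ℝ) := by rw [h1]; linarith
    have h3 : (0:ℝ) ≤ ((j₀-1-j:ℕ):ℝ) := Nat.cast_nonneg _
    apply one_div_le_one_div_of_le (by positivity)
    nlinarith
  have part1 : ∑ j ∈ Ico 0 m, (1:ℝ)/((c+(j:ℝ))^2+y^2) ≤ 5/2 := by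
    calc ∑ j ∈ Ico 0 m, (1:ℝ)/((c+(j:ℝ))^2+y^2)
        ≤ ∑ j ∈ Ico 0 m, (1:ℝ)/(((j₀-1-j : ℕ):ℝ)^2+1) := by
          apply Finset.sum_le_sum
          intro j hjm
          simp only [Finset.mem_Ico] at hjm
          exact hlb j (lt_of_lt_of_le hjm.2 (min_le_left _ _))
      _ ≤ ∑ j ∈ range j₀, (1:ℝ)/(((j₀-1-j : ℕ):ℝ)^2+1) := by
          rw [← range_eq_Ico]
          apply Finset.sum_le_sum_of_subset_of_nonneg
          · exact Finset.range_subset_range.mpr (min_le_left _ _)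
          · intro i _ _; positivity
      _ = ∑ j ∈ range j₀, (1:ℝ)/((j:ℝ)^2+1) := Finset.sum_range_reflect (fun k => (1:ℝ)/((k:ℝ)^2+1)) j₀
      _ ≤ 5/2 := sum_inv_ksq_add_one_le _
  have part2 : ∑ j ∈ Ico m n, (1:ℝ)/((c+(j:ℝ))^2+y^2) ≤ 5/2 := by
    by_cases h : j₀ ≤ n
    · have hmj : m = j₀ := min_eq_left h
      rw [hmj, Finset.sum_Ico_eq_sum_range]
      calc ∑ k ∈ range (n - j₀), (1:ℝ)/((c+((j₀+k : ℕ):ℝ))^2+y^2)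
          ≤ ∑ k ∈ range (n - j₀), (1:ℝ)/((((j₀+k)-j₀ : ℕ):ℝ)^2+1) := by
            apply Finset.sum_le_sum
            intro k _
            exact hub (j₀+k) (Nat.le_add_right _ _)
        _ = ∑ k ∈ range (n - j₀), (1:ℝ)/((k:ℝ)^2+1) := by
            apply Finset.sum_congr rfl
            intro k _
            have e : j₀ + k - j₀ = k := by omega
            rw [e]
        _ ≤ 5/2 := sum_inv_ksq_add_one_le _
    · have hmj : m = n := min_eq_right (le_of_not_ge h)
      rw [hmj]
      norm_num
  linarith

private lemma factor_le (u y a : ℝ) (ha : 0 < a) (ha1 : a ≤ 1) (hy : 0 < y^2) :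
    (u^2+y^2)/((u+a)^2+y^2)
      ≤ (1 + 1/(4*((u+a)^2+y^2))) * ((u^2+y^2)/((u+1)^2+y^2)) ^ a := by
  set A := u^2+y^2 with hA
  set B := (u+a)^2+y^2 with hB
  set D := (u+1)^2+y^2 with hD
  have hApos : 0 < A := by positivity
  have hBpos : 0 < B := by positivity
  have hDpos : 0 < D := by positivity
  have hbern : (D/A) ^ a ≤ 1 + a * (D/A - 1) := by
    have := rpow_one_add_le_one_add_mul_self (s := D/A - 1)
      (by have h := div_pos hDpos hApos; linarith) ha.le ha1
    simpa using this
  set P := (D/A) ^ a with hP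
  have hPpos : 0 < P := Real.rpow_pos_of_pos (by positivity) _
  have hAP : A * P ≤ B + 1/4 := by
    have h1 : A * P ≤ A * (1 + a * (D/A - 1)) := by
      exact mul_le_mul_of_nonneg_left hbern hApos.le
    have h2 : A * (1 + a * (D/A - 1)) = A + a * (D - A) := by
      field_simp
    have h3 : A + a * (D - A) = B + (a - a^2) := by
      rw [hA, hB, hD]; ring
    nlinarith [sq_nonneg (2*a-1)]
  have hinv : (A/D) ^ a = P⁻¹ := by
    rw [hP, ← Real.inv_rpow (by positivity), inv_div]
  rw [hinv]
  have h3 : (1 + 1/(4*B)) * P⁻¹ = (B + 1/4) / (B * P) := by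
    field_simp
  rw [h3]
  have h4 : A/B = (A*P)/(B*P) := by
    rw [mul_div_mul_right _ _ hPpos.ne']
  rw [h4]
  gcongr

private lemma prod_div_telescope (g : ℕ → ℝ) (hg : ∀ j, 0 < g j) (n : ℕ) :
    ∏ j ∈ range n, g j / g (j+1) = g 0 / g n := by
  induction n with
  | zero => simp [(hg 0).ne']
  | succ n ih =>
    rw [Finset.prod_range_succ, ih, div_mul_div_comm,
      mul_comm (g 0) (g n), mul_div_mul_left _ _ (hg n).ne']

private lemma prod_factor_le (x y a : ℝ) (ha : 0 < a) (ha1 : a ≤ 1) (hy : 1 ≤ y^2)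
    (n : ℕ) :
    ∏ j ∈ range (n+1), ((x+(j:ℝ))^2+y^2)/((x+(j:ℝ)+a)^2+y^2)
      ≤ Real.exp (5/4) * ((x^2+y^2)/((x+((n+1:ℕ):ℝ))^2+y^2)) ^ a := by
  have hy0 : (0:ℝ) < y^2 := by linarith
  set A : ℕ → ℝ := fun j => (x+(j:ℝ))^2+y^2 with hAdef
  set B : ℕ → ℝ := fun j => (x+(j:ℝ)+a)^2+y^2 with hBdef
  have hApos : ∀ j, 0 < A j := fun j => by simp only [hAdef]; positivity
  have hBpos : ∀ j, 0 < B j := fun j => by simp only [hBdef]; positivity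
  have hstep : ∀ j ∈ range (n+1),
      A j / B j ≤ (1 + 1/(4*(B j))) * (A j / A (j+1)) ^ a := by
    intro j _
    have hcast : A (j+1) = (x+(j:ℝ)+1)^2+y^2 := by
      simp only [hAdef]; push_cast; ring_nf
    rw [hcast]
    exact factor_le (x+(j:ℝ)) y a ha ha1 hy0
  calc ∏ j ∈ range (n+1), A j / B j
      ≤ ∏ j ∈ range (n+1), (1 + 1/(4*(B j))) * (A j / A (j+1)) ^ a := by
        apply Finset.prod_le_prod
        · intro j _; positivity
        · exact hstep
    _ = (∏ j ∈ range (n+1), (1 + 1/(4*(B j))))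
          * ∏ j ∈ range (n+1), (A j / A (j+1)) ^ a := Finset.prod_mul_distrib
    _ ≤ Real.exp (5/4) * ((x^2+y^2)/((x+((n+1:ℕ):ℝ))^2+y^2)) ^ a := by
        have htel : ∏ j ∈ range (n+1), (A j / A (j+1)) ^ a
            = ((x^2+y^2)/((x+((n+1:ℕ):ℝ))^2+y^2)) ^ a := by
          rw [Real.finset_prod_rpow _ _ (fun j _ => by positivity),
            prod_div_telescope A hApos]
          congr 2
          simp [hAdef]
        rw [htel]
        apply mul_le_mul_of_nonneg_right _ (by positivity)
        calc ∏ j ∈ range (n+1), (1 + 1/(4*(B j)))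
            ≤ ∏ j ∈ range (n+1), Real.exp (1/(4*(B j))) := by
              apply Finset.prod_le_prod
              · intro j _; have := hBpos j; positivity
              · intro j _
                have := Real.add_one_le_exp (1/(4*(B j)))
                linarith
          _ = Real.exp (∑ j ∈ range (n+1), 1/(4*(B j))) := (Real.exp_sum _ _).symm
          _ ≤ Real.exp (5/4) := by
              apply Real.exp_le_exp.mpr
              have hsum : ∑ j ∈ range (n+1), 1/(4*(B j))
                  = (1/4) * ∑ j ∈ range (n+1), 1/((x+a+(j:ℝ))^2+y^2) := by
                rw [Finset.mul_sum]
                apply Finset.sum_congr rfl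
                intro j _
                simp only [hBdef]
                rw [show x+(j:ℝ)+a = x+a+(j:ℝ) by ring, div_mul_div_comm]
                norm_num
              rw [hsum]
              have := sum_inv_shift_le (x+a) y hy (n+1)
              linarith

private lemma rpow_sq_comm (t : ℝ) (ht : 0 ≤ t) (a : ℝ) :
    (t^a)^(2:ℕ) = (t^(2:ℕ))^a := by
  rw [← Real.rpow_natCast (t^a) 2, ← Real.rpow_natCast t 2, ← Real.rpow_mul ht,
    ← Real.rpow_mul ht, mul_comm]

private lemma gamma_ratio_le_one (a : ℝ) (ha : 0 < a) (ha1 : a ≤ 1) (w : ℂ)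
    (hy : 1 ≤ |w.im|) (hx : |w.re| ≤ |w.im|/2) :
    ‖Complex.Gamma (w + a) / Complex.Gamma w‖ ≤ 7 * |w.im| ^ a := by
  set x := w.re with hxdef
  set y := w.im with hydef
  have hy2 : 1 ≤ y^2 := by nlinarith [abs_nonneg y, _root_.sq_abs y]
  have hyne : y ≠ 0 := fun h => by simp [h] at hy; linarith
  have hne : ∀ s : ℂ, s.im = y → ∀ m : ℕ, s ≠ -m := by
    intro s hs m h
    have := congrArg Complex.im h
    simp [hs] at this
    exact hyne this
  have hΓw : Complex.Gamma w ≠ 0 := Complex.Gamma_ne_zero (hne w rfl)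
  have htend : Tendsto (fun n => ‖GammaSeq (w+a) n / GammaSeq w n‖)
      atTop (𝓝 (‖Complex.Gamma (w+a) / Complex.Gamma w‖)) :=
    (continuous_norm.tendsto _).comp
      (((GammaSeq_tendsto_Gamma (w+a)).div (GammaSeq_tendsto_Gamma w)) hΓw)
  apply le_of_tendsto htend
  rw [eventually_atTop]
  refine ⟨⌈2*|x|⌉₊ + 1, fun n hn => ?_⟩
  have hn1 : 1 ≤ n := le_trans (Nat.le_add_left 1 _) hn
  have hnx : 2*|x| ≤ (n:ℝ) := by
    have h0 : ⌈2*|x|⌉₊ ≤ n := by omega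
    calc 2*|x| ≤ (⌈2*|x|⌉₊ : ℝ) := Nat.le_ceil _
    _ ≤ n := by exact_mod_cast h0
  have hnpos : (0:ℝ) < n := by exact_mod_cast hn1
  set A : ℕ → ℝ := fun j => (x+(j:ℝ))^2+y^2 with hA
  set B : ℕ → ℝ := fun j => (x+(j:ℝ)+a)^2+y^2 with hB
  have habs : ‖GammaSeq (w+a) n / GammaSeq w n‖
      = (n:ℝ) ^ a * ((∏ j ∈ range (n+1), ‖w+j‖)
          / ∏ j ∈ range (n+1), ‖w+a+j‖) := by
    simp only [Complex.GammaSeq, norm_div, norm_mul]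
    rw [norm_prod, norm_prod]
    rw [show ((n:ℕ):ℂ) = ((n:ℝ):ℂ) by push_cast; rfl]
    rw [Complex.norm_cpow_eq_rpow_re_of_pos hnpos, Complex.norm_cpow_eq_rpow_re_of_pos hnpos]
    simp only [Complex.add_re, Complex.ofReal_re]
    rw [Real.rpow_add hnpos]
    have h1 : ‖(n.factorial:ℂ)‖ ≠ 0 := by
      simp [Nat.factorial_ne_zero]
    have h2 : (n:ℝ) ^ (w.re) ≠ 0 := by positivity
    have h3 : ∏ j ∈ range (n+1), ‖w + j‖ ≠ 0 := by
      apply Finset.prod_ne_zero_iff.mpr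
      intro j _
      simp only [ne_eq, norm_eq_zero]
      intro h
      exact hyne (by simpa using congrArg Complex.im h)
    field_simp
  rw [habs]
  have hprodsq : ∀ (v : ℂ), v.im = y → ‖v‖ ^ 2 = v.re^2 + y^2 := by
    intro v hv
    rw [Complex.sq_norm, Complex.normSq_apply, hv]
    ring
  set L := (n:ℝ) ^ a * ((∏ j ∈ range (n+1), ‖w+j‖)
          / ∏ j ∈ range (n+1), ‖w+a+j‖) with hL
  have hLnn : 0 ≤ L := by
    apply mul_nonneg (by positivity)
    apply div_nonneg <;> exact Finset.prod_nonneg fun j _ => norm_nonneg _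
  have key : L^2 ≤ (7 * |y| ^ a)^2 := by
    have e1 : (∏ j ∈ range (n+1), ‖w+j‖)^2 = ∏ j ∈ range (n+1), A j := by
      rw [← Finset.prod_pow]
      refine Finset.prod_congr rfl fun j _ => ?_
      rw [hprodsq (w+j) (by simp [hydef])]
      simp only [hA, Complex.add_re, Complex.natCast_re]
      try rw [← hxdef]
      try ring
    have e2 : (∏ j ∈ range (n+1), ‖w+a+j‖)^2 = ∏ j ∈ range (n+1), B j := by
      rw [← Finset.prod_pow]
      refine Finset.prod_congr rfl fun j _ => ?_
      rw [hprodsq (w+a+j) (by simp [hydef])]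
      simp only [hB, Complex.add_re, Complex.natCast_re, Complex.ofReal_re]
      try rw [← hxdef]
      try ring
    have e3 : L^2 = ((n:ℝ)^a)^2 * ((∏ j ∈ range (n+1), A j) / ∏ j ∈ range (n+1), B j) := by
      rw [hL, mul_pow, div_pow, e1, e2]
    rw [e3, show (∏ j ∈ range (n+1), A j) / ∏ j ∈ range (n+1), B j
        = ∏ j ∈ range (n+1), A j / B j from (Finset.prod_div_distrib _ _).symm]
    have hbd := prod_factor_le x y a ha ha1 hy2 n
    have hden : ((n:ℝ)/2)^2 ≤ (x+((n+1:ℕ):ℝ))^2+y^2 := by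
      have h5 : (n:ℝ)/2 ≤ x+((n+1:ℕ):ℝ) := by
        push_cast
        have h6 := (abs_le.mp (by linarith : |x| ≤ (n:ℝ)/2)).1
        linarith
      nlinarith [sq_nonneg y, hnpos]
    have hdenpos : (0:ℝ) < ((n:ℝ)/2)^2 := by positivity
    have hx2 : x^2 ≤ y^2/4 := by nlinarith [_root_.sq_abs x, _root_.sq_abs y, abs_nonneg x]
    calc ((n:ℝ)^a)^2 * ∏ j ∈ range (n+1), A j / B j
        ≤ ((n:ℝ)^a)^2 * (Real.exp (5/4) * ((x^2+y^2)/((x+((n+1:ℕ):ℝ))^2+y^2)) ^ a) := by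
          apply mul_le_mul_of_nonneg_left _ (by positivity)
          simpa [hA, hB] using hbd
      _ = Real.exp (5/4) * (((n:ℝ)^2)^a * ((x^2+y^2)/((x+((n+1:ℕ):ℝ))^2+y^2)) ^ a) := by
          rw [rpow_sq_comm (n:ℝ) hnpos.le a]
          try ring
      _ = Real.exp (5/4) * (((n:ℝ)^2 * ((x^2+y^2)/((x+((n+1:ℕ):ℝ))^2+y^2))) ^ a) := by
          rw [Real.mul_rpow (by positivity) (by positivity)]
      _ ≤ Real.exp (5/4) * ((5*y^2) ^ a) := by
          apply mul_le_mul_of_nonneg_left _ (Real.exp_nonneg _)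
          apply Real.rpow_le_rpow (by positivity) _ ha.le
          calc (n:ℝ)^2 * ((x^2+y^2)/((x+((n+1:ℕ):ℝ))^2+y^2))
              ≤ (n:ℝ)^2 * ((x^2+y^2)/(((n:ℝ)/2)^2)) := by
                apply mul_le_mul_of_nonneg_left _ (by positivity)
                gcongr
                try exact hden
            _ = 4*(x^2+y^2) := by
                field_simp
                ring
            _ ≤ 5*y^2 := by nlinarith
      _ ≤ (7 * |y| ^ a)^2 := by
          have h6 : (5*y^2)^a = 5^a * (|y|^a)^2 := by
            rw [Real.mul_rpow (by norm_num) (by positivity)]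
            congr 1
            rw [← _root_.sq_abs y, rpow_sq_comm |y| (abs_nonneg y) a]
          rw [h6]
          have h7 : (5:ℝ)^a ≤ 5 := by
            calc (5:ℝ)^a ≤ 5^(1:ℝ) := Real.rpow_le_rpow_of_exponent_le (by norm_num) ha1
            _ = 5 := Real.rpow_one 5
          have h9 : Real.exp (5/4) < 7.5 := by
            have h8 : Real.exp (5/4) ≤ Real.exp 2 := Real.exp_le_exp.mpr (by norm_num)
            have h10 : Real.exp 2 = Real.exp 1 * Real.exp 1 := by
              rw [← Real.exp_add]; norm_num
            nlinarith [Real.exp_one_lt_d9, Real.exp_pos 1]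
          have h11 : (0:ℝ) ≤ (|y|^a)^2 := by positivity
          have h12 : (5:ℝ)^a*(|y|^a)^2 ≤ 5*(|y|^a)^2 := mul_le_mul_of_nonneg_right h7 h11
          have h13 : Real.exp (5/4) * ((5:ℝ)^a*(|y|^a)^2) ≤ 7.5 * (5*(|y|^a)^2) :=
            mul_le_mul h9.le h12 (by positivity) (by norm_num)
          nlinarith [h13, h11]
  calc L = Real.sqrt (L^2) := (Real.sqrt_sq hLnn).symm
    _ ≤ Real.sqrt ((7 * |y| ^ a)^2) := Real.sqrt_le_sqrt key
    _ = 7 * |y| ^ a := Real.sqrt_sq (by positivity)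

private lemma gamma_ratio_general (k : ℕ) :
    ∀ a : ℝ, 0 < a → a ≤ 1 → ∀ w : ℂ, 1 ≤ |w.im| → 2*(a+k) ≤ |w.im| →
      |w.re| ≤ |w.im|/2 →
      ‖Complex.Gamma (w + ((a:ℂ) + (k:ℕ))) / Complex.Gamma w‖
        ≤ 7 * 2^k * |w.im| ^ (a+(k:ℝ)) := by
  induction k with
  | zero =>
    intro a ha ha1 w hy _ hx
    simpa using gamma_ratio_le_one a ha ha1 w hy hx
  | succ k ih =>
    intro a ha ha1 w hy h2 hx
    have hyne : w.im ≠ 0 := fun h => by simp [h] at hy; linarith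
    have hak : (0:ℝ) ≤ a + k := by positivity
    have hargne : w + ((a:ℂ) + (k:ℕ)) ≠ 0 := by
      intro h
      have := congrArg Complex.im h
      simp at this
      exact hyne this
    have hsplit : w + ((a:ℂ) + ((k+1:ℕ):ℂ)) = (w + ((a:ℂ) + (k:ℕ))) + 1 := by
      push_cast; ring
    rw [hsplit, Complex.Gamma_add_one _ hargne, mul_div_assoc, norm_mul]
    have hb1 : ‖w + ((a:ℂ) + (k:ℕ))‖ ≤ 2 * |w.im| := by
      have e : w + ((a:ℂ) + (k:ℕ)) = w + (((a + k : ℝ)):ℂ) := by push_cast; ring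
      rw [e]
      calc ‖w + (((a + k : ℝ)):ℂ)‖
          ≤ ‖w‖ + ‖(((a + k : ℝ)):ℂ)‖ := norm_add_le _ _
        _ ≤ (|w.re| + |w.im|) + (a+k) := by
            have h3 := Complex.norm_le_abs_re_add_abs_im w
            have h4 : ‖(((a + k : ℝ)):ℂ)‖ = a + k := by
              rw [Complex.norm_of_nonneg hak]
            linarith
        _ ≤ 2 * |w.im| := by
            push_cast at h2
            linarith
    have h2' : 2*(a+(k:ℝ)) ≤ |w.im| := by push_cast at h2; linarith
    have ihw := ih a ha ha1 w hy h2' hx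
    calc ‖w + ((a:ℂ) + (k:ℕ))‖
          * ‖Complex.Gamma (w + ((a:ℂ) + (k:ℕ))) / Complex.Gamma w‖
        ≤ (2 * |w.im|) * (7 * 2^k * |w.im| ^ (a+(k:ℝ))) := by
          apply mul_le_mul hb1 ihw (norm_nonneg _) (by positivity)
      _ = 7 * 2^(k+1) * |w.im| ^ (a+((k+1:ℕ):ℝ)) := by
          have : |w.im| ^ (a+((k+1:ℕ):ℝ)) = |w.im| ^ (a+(k:ℝ)) * |w.im| := by
            rw [← Real.rpow_add_one (fun h => by simp [h] at hy; linarith)]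
            push_cast; ring_nf
          rw [this]
          ring

private lemma gamma_ratio_bound (a : ℝ) (ha : 0 < a) :
    ∃ C M : ℝ, 0 < C ∧ 0 < M ∧ ∀ w : ℂ, M ≤ |w.im| → |w.re| ≤ |w.im|/2 →
      ‖Complex.Gamma (w + a) / Complex.Gamma w‖ ≤ C * |w.im| ^ a := by
  set k : ℕ := ⌈a⌉₊ - 1 with hk
  have hkc : (k:ℝ) < a := by
    have h1 : (⌈a⌉₊:ℝ) < a + 1 := Nat.ceil_lt_add_one ha.le
    have h2 : 1 ≤ ⌈a⌉₊ := Nat.one_le_ceil_iff.mpr ha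
    have : ((⌈a⌉₊ - 1 : ℕ):ℝ) = (⌈a⌉₊:ℝ) - 1 := by
      rw [Nat.cast_sub h2]; norm_num
    rw [hk, this]; linarith
  have hak : a - k ≤ 1 := by
    have h1 : a ≤ (⌈a⌉₊:ℝ) := Nat.le_ceil a
    have h2 : 1 ≤ ⌈a⌉₊ := Nat.one_le_ceil_iff.mpr ha
    have : ((⌈a⌉₊ - 1 : ℕ):ℝ) = (⌈a⌉₊:ℝ) - 1 := by
      rw [Nat.cast_sub h2]; norm_num
    rw [hk, this]; linarith
  set a' : ℝ := a - k with ha'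
  have ha'pos : 0 < a' := by simp [ha']; linarith
  refine ⟨7 * 2^k, max 1 (2*a), by positivity, by positivity, fun w hM hx => ?_⟩
  have hy1 : 1 ≤ |w.im| := le_trans (le_max_left _ _) hM
  have hy2 : 2*(a'+k) ≤ |w.im| := by
    have : a' + (k:ℝ) = a := by simp [ha']
    rw [this]
    exact le_trans (le_max_right _ _) hM
  have he : w + (a:ℂ) = w + ((a':ℂ) + (k:ℕ)) := by
    simp only [ha']
    push_cast; ring
  have := gamma_ratio_general k a' ha'pos hak w hy1 hy2 hx
  rw [he]
  have hae : a' + (k:ℝ) = a := by simp [ha']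
  rw [hae] at this
  exact this

private lemma Gamma_ne_zero_of_im_ne_zero (s : ℂ) (hs : s.im ≠ 0) :
    Complex.Gamma s ≠ 0 := by
  apply Complex.Gamma_ne_zero
  intro m h
  have := congrArg Complex.im h
  simp at this
  exact hs this

private lemma jacobiC_inv_eq (α β : ℝ) (hβ : -(1/2:ℝ) < β) (hαβ : β < α) (z : ℂ)
    (hz : z.re ≠ 0) :
    (jacobiC α β z)⁻¹ =
      ((2:ℂ)^((1:ℂ)-((α:ℂ)+β+1)) * ((Real.sqrt Real.pi : ℝ):ℂ) / Complex.Gamma ((α:ℂ)+1))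
      * (Complex.Gamma (Complex.I*z/2 + (((α+β+1)/2 : ℝ):ℂ)) / Complex.Gamma (Complex.I*z/2))
      * (Complex.Gamma ((Complex.I*z/2 + 1/2) + (((α-β)/2 : ℝ):ℂ))
          / Complex.Gamma (Complex.I*z/2 + 1/2)) := by
  set w : ℂ := Complex.I*z/2 with hw
  have hwim : w.im = z.re/2 := by simp [hw]
  have hzim : (Complex.I*z).im = z.re := by simp
  have hG0 : Complex.Gamma w ≠ 0 := Gamma_ne_zero_of_im_ne_zero _ (by rw [hwim]; simpa using hz)
  have hG1 : Complex.Gamma (w + 1/2) ≠ 0 := by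
    apply Gamma_ne_zero_of_im_ne_zero
    simp [hwim]
    simpa using hz
  have hGa : Complex.Gamma (w + (((α+β+1)/2 : ℝ):ℂ)) ≠ 0 := by
    apply Gamma_ne_zero_of_im_ne_zero
    simp [hwim]
    simpa using hz
  have hGb : Complex.Gamma ((w + 1/2) + (((α-β)/2 : ℝ):ℂ)) ≠ 0 := by
    apply Gamma_ne_zero_of_im_ne_zero
    simp [hwim]
    simpa using hz
  have hGIzne : Complex.Gamma (Complex.I*z) ≠ 0 :=
    Gamma_ne_zero_of_im_ne_zero _ (by rw [hzim]; exact hz)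
  have hGA : Complex.Gamma ((α:ℂ)+1) ≠ 0 := by
    rw [show ((α:ℂ)+1) = ((α+1:ℝ):ℂ) by push_cast; ring, Complex.Gamma_ofReal]
    exact_mod_cast (Real.Gamma_pos_of_pos (by linarith)).ne'
  have hπ : ((Real.sqrt Real.pi : ℝ):ℂ) ≠ 0 :=
    Complex.ofReal_ne_zero.mpr (Real.sqrt_pos.mpr Real.pi_pos).ne'
  have h2ne : ∀ s : ℂ, (2:ℂ)^s ≠ 0 := fun s => by
    simp [Complex.cpow_eq_zero_iff]
  -- duplication formula
  have hdup := Complex.Gamma_mul_Gamma_add_half w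
  have h2w : 2*w = Complex.I*z := by rw [hw]; ring
  rw [h2w] at hdup
  -- rewrite the Gamma factors in jacobiC in terms of w
  have harg1 : ((α:ℂ) + β + 1 + Complex.I * z) / 2 = w + (((α+β+1)/2 : ℝ):ℂ) := by
    rw [hw]; push_cast; ring
  have harg2 : ((α:ℂ) + β + 1 + Complex.I * z) / 2 - β = (w + 1/2) + (((α-β)/2 : ℝ):ℂ) := by
    rw [hw]; push_cast; ring
  have hpow : (2:ℂ)^((α:ℂ)+β+1-Complex.I*z) * ((2:ℂ)^((1:ℂ)-((α:ℂ)+β+1))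
      * (2:ℂ)^(2*w)) = 2 := by
    rw [← Complex.cpow_add _ _ two_ne_zero, ← Complex.cpow_add _ _ two_ne_zero, h2w]
    rw [show (α:ℂ)+β+1-Complex.I*z + ((1:ℂ)-((α:ℂ)+β+1) + Complex.I*z) = 1 by ring]
    exact Complex.cpow_one 2
  have hpow' : (2:ℂ)^((α:ℂ)+β+1-Complex.I*z) * (2:ℂ)^((1:ℂ)-((α:ℂ)+β+1))
      = (2:ℂ)^((1:ℂ)-Complex.I*z) := by
    rw [← Complex.cpow_add _ _ two_ne_zero]
    congr 1
    ring
  apply inv_eq_of_mul_eq_one_right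
  rw [jacobiC, harg2, harg1]
  set Ga := Complex.Gamma (w + (((α+β+1)/2 : ℝ):ℂ)) with hGa'
  set Gb := Complex.Gamma ((w + 1/2) + (((α-β)/2 : ℝ):ℂ)) with hGb'
  set G0 := Complex.Gamma w with hG0'
  set G1 := Complex.Gamma (w + 1/2) with hG1'
  set GA := Complex.Gamma ((α:ℂ)+1) with hGA'
  set GI := Complex.Gamma (Complex.I*z) with hGI'
  set P := (2:ℂ)^((α:ℂ)+β+1-Complex.I*z) with hP'
  set Q := (2:ℂ)^((1:ℂ)-((α:ℂ)+β+1)) with hQ'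
  set T := (2:ℂ)^((1:ℂ)-Complex.I*z) with hT'
  set S := ((Real.sqrt Real.pi : ℝ):ℂ) with hS'
  field_simp
  linear_combination GI*S*hpow' - hdup

private lemma jacobiC_diffAt (α β : ℝ) (hβ : -(1/2:ℝ) < β) (hαβ : β < α) (z : ℂ)
    (hz : z.re ≠ 0) :
    DifferentiableAt ℂ (fun z => (jacobiC α β z)⁻¹) z := by
  set ρc : ℂ := (α:ℂ) + β + 1 with hρ
  have hG2 : Complex.Gamma ((ρc + Complex.I*z)/2) ≠ 0 := by
    apply Gamma_ne_zero_of_im_ne_zero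
    simp [hρ]
    simpa using hz
  have hG3 : Complex.Gamma ((ρc + Complex.I*z)/2 - β) ≠ 0 := by
    apply Gamma_ne_zero_of_im_ne_zero
    simp [hρ]
    simpa using hz
  have hGIz : Complex.Gamma (Complex.I*z) ≠ 0 := by
    apply Gamma_ne_zero_of_im_ne_zero
    simpa using hz
  have hGA : Complex.Gamma ((α:ℂ)+1) ≠ 0 := by
    rw [show ((α:ℂ)+1) = ((α+1:ℝ):ℂ) by push_cast; ring, Complex.Gamma_ofReal]
    exact_mod_cast (Real.Gamma_pos_of_pos (by linarith)).ne'
  have hne : ∀ s : ℂ, s.im ≠ 0 → ∀ m : ℕ, s ≠ -m := by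
    intro s hs m h
    have := congrArg Complex.im h
    simp at this
    exact hs this
  have d1 : DifferentiableAt ℂ (fun z:ℂ => (2:ℂ)^(ρc - Complex.I*z)) z := by
    apply DifferentiableAt.const_cpow _ (Or.inl two_ne_zero)
    fun_prop
  have d2 : DifferentiableAt ℂ (fun z:ℂ => Complex.Gamma (Complex.I*z)) z := by
    have h := (Complex.differentiableAt_Gamma (Complex.I*z)
      (hne _ (by simpa using hz))).comp z (by fun_prop :
        DifferentiableAt ℂ (fun z:ℂ => Complex.I*z) z)
    exact h
  have d4 : DifferentiableAt ℂ (fun z:ℂ => Complex.Gamma ((ρc + Complex.I*z)/2)) z := by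
    have h := (Complex.differentiableAt_Gamma ((ρc + Complex.I*z)/2)
      (hne _ (by simp [hρ]; simpa using hz))).comp z (by fun_prop :
        DifferentiableAt ℂ (fun z:ℂ => (ρc + Complex.I*z)/2) z)
    exact h
  have d5 : DifferentiableAt ℂ (fun z:ℂ => Complex.Gamma ((ρc + Complex.I*z)/2 - β)) z := by
    have h := (Complex.differentiableAt_Gamma ((ρc + Complex.I*z)/2 - β)
      (hne _ (by simp [hρ]; simpa using hz))).comp z (by fun_prop :
        DifferentiableAt ℂ (fun z:ℂ => (ρc + Complex.I*z)/2 - β) z)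
    exact h
  have hd : DifferentiableAt ℂ (jacobiC α β) z := by
    have h := ((d1.mul d2).mul (differentiableAt_const (Complex.Gamma ((α:ℂ)+1)))).div
      (d4.mul d5) (mul_ne_zero hG2 hG3)
    exact h
  have hnz : jacobiC α β z ≠ 0 := by
    rw [jacobiC]
    apply div_ne_zero
    · exact mul_ne_zero (mul_ne_zero (by simp [Complex.cpow_eq_zero_iff]) hGIz) hGA
    · exact mul_ne_zero (by simpa [hρ] using hG2) (by simpa [hρ] using hG3)
  exact hd.inv hnz

theorem jacobiCInv_deriv_bound (α β : ℝ) (hβ : -(1/2 : ℝ) < β) (hαβ : β < α) :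
    ∃ C R : ℝ, 0 < C ∧ 0 < R ∧ ∀ l : ℝ, R ≤ |l| →
      ‖deriv (fun z => (jacobiC α β z)⁻¹) (l : ℂ)‖ ≤
        C * |l| ^ (α - 1/2 : ℝ) := by
  have ha₁ : 0 < (α+β+1)/2 := by linarith
  have ha₂ : 0 < (α-β)/2 := by linarith
  obtain ⟨C₁, M₁, hC₁, hM₁, hbd₁⟩ := gamma_ratio_bound ((α+β+1)/2) ha₁
  obtain ⟨C₂, M₂, hC₂, hM₂, hbd₂⟩ := gamma_ratio_bound ((α-β)/2) ha₂
  set Kc : ℂ := (2:ℂ)^((1:ℂ)-((α:ℂ)+β+1)) * ((Real.sqrt Real.pi : ℝ):ℂ)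
      / Complex.Gamma ((α:ℂ)+1) with hKc
  set K₀ : ℝ := ‖Kc‖ with hK₀
  have hGA : Complex.Gamma ((α:ℂ)+1) ≠ 0 := by
    rw [show ((α:ℂ)+1) = ((α+1:ℝ):ℂ) by push_cast; ring, Complex.Gamma_ofReal]
    exact_mod_cast (Real.Gamma_pos_of_pos (by linarith)).ne'
  have hK₀pos : 0 < K₀ := by
    rw [hK₀]
    apply norm_pos_iff.mpr
    apply div_ne_zero _ hGA
    exact mul_ne_zero (by simp [Complex.cpow_eq_zero_iff])
      (Complex.ofReal_ne_zero.mpr (Real.sqrt_pos.mpr Real.pi_pos).ne')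
  refine ⟨8*(K₀*C₁*C₂), 16*(M₁+M₂)+16, by positivity, by positivity, fun l hl => ?_⟩
  have hlpos : (0:ℝ) < |l| := lt_of_lt_of_le (by positivity) hl
  set r : ℝ := |l|/8 with hr
  have hrpos : 0 < r := by positivity
  -- uniform bound on the closed ball
  have hkey : ∀ z ∈ Metric.closedBall (l:ℂ) r,
      ‖(jacobiC α β z)⁻¹‖ ≤ K₀*C₁*C₂*|l|^(α+1/2 : ℝ) := by
    intro z hz
    rw [Metric.mem_closedBall, Complex.dist_eq] at hz
    have hre : |z.re - l| ≤ r := by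
      have := Complex.abs_re_le_norm (z - l)
      simp only [Complex.sub_re, Complex.ofReal_re] at this
      linarith
    have him : |z.im| ≤ r := by
      have := Complex.abs_im_le_norm (z - l)
      simp only [Complex.sub_im, Complex.ofReal_im, sub_zero] at this
      linarith
    have hzre_lb : 7*|l|/8 ≤ |z.re| := by
      have h1 : |l| - |z.re| ≤ |l - z.re| := abs_sub_abs_le_abs_sub l z.re
      rw [abs_sub_comm] at h1
      linarith
    have hzre_ub : |z.re| ≤ 9*|l|/8 := by
      have h1 : |z.re| - |l| ≤ |z.re - l| := abs_sub_abs_le_abs_sub z.re l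
      linarith
    have hzre_ne : z.re ≠ 0 := by
      intro h
      rw [h] at hzre_lb
      simp at hzre_lb
      linarith
    rw [jacobiC_inv_eq α β hβ hαβ z hzre_ne, norm_mul, norm_mul]
    set w : ℂ := Complex.I*z/2 with hw
    have hwim : w.im = z.re/2 := by simp [hw]
    have hwre : w.re = -z.im/2 := by simp [hw]
    have hyabs : |w.im| = |z.re|/2 := by rw [hwim, abs_div]; norm_num
    have hylb : 7*|l|/16 ≤ |w.im| := by rw [hyabs]; linarith
    have hyub : |w.im| ≤ 9*|l|/16 := by rw [hyabs]; linarith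
    have hxub : |w.re| ≤ |l|/16 := by
      rw [hwre, abs_div, abs_neg]
      have : |z.im| ≤ |l|/8 := him
      norm_num
      linarith
    have hlM : M₁ + M₂ + 7 ≤ 7*|l|/16 := by
      have : 16*(M₁+M₂)+16 ≤ |l| := hl
      linarith [hM₁, hM₂]
    have hb1 : ‖Complex.Gamma (w + (((α+β+1)/2 : ℝ):ℂ)) / Complex.Gamma w‖
        ≤ C₁ * |w.im| ^ ((α+β+1)/2 : ℝ) := by
      apply hbd₁ w (by linarith [hM₂]) _
      calc |w.re| ≤ |l|/16 := hxub
        _ ≤ (7*|l|/16)/2 := by linarith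
        _ ≤ |w.im|/2 := by linarith
    have hb2 : ‖Complex.Gamma ((w + 1/2) + (((α-β)/2 : ℝ):ℂ))
        / Complex.Gamma (w + 1/2)‖ ≤ C₂ * |w.im| ^ ((α-β)/2 : ℝ) := by
      have h12im : (w + 1/2).im = w.im := by simp
      have h12re : (w + 1/2).re = w.re + 1/2 := by simp
      have := hbd₂ (w + 1/2) (by rw [h12im]; linarith [hM₁]) (by
        rw [h12im, h12re]
        have h1 : |w.re + 1/2| ≤ |w.re| + 1/2 := by
          calc |w.re + 1/2| ≤ |w.re| + |(1/2 : ℝ)| := abs_add_le _ _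
          _ = |w.re| + 1/2 := by norm_num
        have h2 : (1:ℝ)/2 ≤ 5*|l|/32 := by linarith
        calc |w.re + 1/2| ≤ |l|/16 + 1/2 := by linarith
          _ ≤ 7*|l|/32 := by linarith
          _ ≤ |w.im|/2 := by linarith)
      rw [h12im] at this
      exact this
    calc ‖Kc‖ * ‖Complex.Gamma (w + (((α+β+1)/2 : ℝ):ℂ))
            / Complex.Gamma w‖
          * ‖Complex.Gamma ((w + 1/2) + (((α-β)/2 : ℝ):ℂ))
            / Complex.Gamma (w + 1/2)‖
        ≤ K₀ * (C₁ * |w.im| ^ ((α+β+1)/2 : ℝ)) * (C₂ * |w.im| ^ ((α-β)/2 : ℝ)) := by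
          apply mul_le_mul _ hb2 (norm_nonneg _) (by positivity)
          apply mul_le_mul le_rfl hb1 (norm_nonneg _) hK₀pos.le
      _ = K₀*C₁*C₂ * |w.im| ^ (α+1/2 : ℝ) := by
          rw [show (α+1/2 : ℝ) = (α+β+1)/2 + (α-β)/2 by ring,
            Real.rpow_add (by linarith : (0:ℝ) < |w.im|)]
          ring
      _ ≤ K₀*C₁*C₂*|l|^(α+1/2 : ℝ) := by
          apply mul_le_mul_of_nonneg_left _ (by positivity)
          apply Real.rpow_le_rpow (abs_nonneg _) (by linarith) (by linarith)
  -- Cauchy estimate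
  have hball : Metric.closedBall (l:ℂ) r = closure (Metric.ball (l:ℂ) r) :=
    (closure_ball (l:ℂ) hrpos.ne').symm
  have hdiff : DifferentiableOn ℂ (fun z => (jacobiC α β z)⁻¹)
      (Metric.closedBall (l:ℂ) r) := by
    intro z hz
    apply DifferentiableAt.differentiableWithinAt
    apply jacobiC_diffAt α β hβ hαβ
    -- z.re ≠ 0 on the ball
    rw [Metric.mem_closedBall, Complex.dist_eq] at hz
    have hre : |z.re - l| ≤ r := by
      have := Complex.abs_re_le_norm (z - l)
      simp only [Complex.sub_re, Complex.ofReal_re] at this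
      linarith
    intro h
    rw [h] at hre
    rw [show (0:ℝ) - l = -l by ring, abs_neg] at hre
    linarith
  have hd : DiffContOnCl ℂ (fun z => (jacobiC α β z)⁻¹) (Metric.ball (l:ℂ) r) := by
    apply DifferentiableOn.diffContOnCl
    rwa [← hball]
  have hcauchy := Complex.norm_deriv_le_of_forall_mem_sphere_norm_le hrpos hd
    (fun z hz => by
      exact hkey z (Metric.sphere_subset_closedBall hz))
  calc ‖deriv (fun z => (jacobiC α β z)⁻¹) (l : ℂ)‖
      ≤ (K₀*C₁*C₂*|l|^(α+1/2 : ℝ)) / r := hcauchy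
    _ = 8*(K₀*C₁*C₂) * |l| ^ (α - 1/2 : ℝ) := by
        rw [hr, show (α-1/2 : ℝ) = (α+1/2) - 1 by ring,
          Real.rpow_sub hlpos, Real.rpow_one]
        field_simp
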